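/- arXiv:1705.10462 — 2 statements merged into one kernel-verified Lean document; each statement's English description precedes it below -/
import Mathlib

section
/- Let N ≥ 2, let M ≥ 1, let ρ_1, …, ρ_M be N×N density matrices, and let w_1, …, w_M be nonnegative reals with ∑_i w_i = 1. Define P̄ = ∑_i w_i · P(ρ_i), C̄ = ∑_i w_i · C(ρ_i), and Ē = ∑_i w_i · sqrt(S_L(ρ_i)). Then P̄² + C̄² + Ē² ≤ 1. -/
open Matrix BigOperators ComplexOrder

/-- The largest diagonal entry (as a real number) of a complex matrix. -/
noncomputable def maxDiag (N : ℕ) (ρ : Matrix (Fin N) (Fin N) ℂ) : ℝ :=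
  ⨆ k, (ρ k k).re

/-- The which-path predictability P(ρ) = (N·p₁ − 1)/(N − 1). -/
noncomputable def pred (N : ℕ) (ρ : Matrix (Fin N) (Fin N) ℂ) : ℝ :=
  ((N : ℝ) * maxDiag N ρ - 1) / ((N : ℝ) - 1)

/-- The l₁ quantum coherence C(ρ) = (1/(N−1)) ∑_{i ≠ k} |ρ_ik|. -/
noncomputable def coh (N : ℕ) (ρ : Matrix (Fin N) (Fin N) ℂ) : ℝ :=
  (1 / ((N : ℝ) - 1)) * ∑ i, ∑ k, if i ≠ k then ‖ρ i k‖ else 0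

/-- The normalized linear entropy S_L(ρ) = N(1 − tr(ρ²))/(N − 1). -/
noncomputable def linEnt (N : ℕ) (ρ : Matrix (Fin N) (Fin N) ℂ) : ℝ :=
  (N : ℝ) * (1 - ((ρ * ρ).trace).re) / ((N : ℝ) - 1)

variable {N : ℕ} {ρ : Matrix (Fin N) (Fin N) ℂ}

lemma quad_eval (ρ : Matrix (Fin N) (Fin N) ℂ) (i k : Fin N) (a b : ℂ) :
    star (Pi.single i a + Pi.single k b) ⬝ᵥ ρ *ᵥ (Pi.single i a + Pi.single k b)
      = star a * (ρ i i * a) + star a * (ρ i k * b) + (star b * (ρ k i * a)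
        + star b * (ρ k k * b)) := by
  simp [star_add, ← Pi.single_star, mulVec_add, dotProduct_add, add_dotProduct,
    single_dotProduct]
  ring

lemma diag_nonneg' (hρ : ρ.PosSemidef) (i : Fin N) : 0 ≤ (ρ i i).re ∧ (ρ i i).im = 0 := by
  have h := hρ.dotProduct_mulVec_nonneg (Pi.single i 1)
  have h2 := quad_eval ρ i i 1 0
  simp only [add_zero, Pi.single_zero, mul_zero, zero_mul, star_one, one_mul, mul_one,
    star_zero, zero_add] at h2
  rw [h2] at h
  rw [Complex.le_def] at h
  exact ⟨h.1, (h.2).symm⟩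

lemma offdiag_sq_le (hρ : ρ.PosSemidef) (i k : Fin N) :
    (‖ρ i k‖)^2 ≤ (ρ i i).re * (ρ k k).re := by
  set c := ρ i k with hc
  have hki : ρ k i = star c := by rw [hc, ← hρ.1.apply i k, star_star]
  have hq : ∀ r : ℝ, 0 ≤ (‖c‖ ^ 2 * (ρ i i).re) * (r * r)
      + (2 * ‖c‖ ^ 2) * r + (ρ k k).re := by
    intro r
    have h := hρ.dotProduct_mulVec_nonneg (Pi.single i (c * r) + Pi.single k 1)
    rw [quad_eval ρ i k (c * r) 1] at h
    rw [Complex.le_def] at h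
    have h1 := h.1
    have him0 : (ρ i i).im = 0 := (diag_nonneg' hρ i).2
    have : (star (c * (r:ℂ)) * (ρ i i * (c * (r:ℂ))) + star (c * (r:ℂ)) * (ρ i k * 1) +
        (star (1:ℂ) * (ρ k i * (c * (r:ℂ))) + star (1:ℂ) * (ρ k k * 1))).re
        = (‖c‖ ^ 2 * (ρ i i).re) * (r * r) + (2 * ‖c‖ ^ 2) * r
          + (ρ k k).re := by
      simp only [star_mul', Complex.star_def, Complex.conj_ofReal, mul_one, one_mul, star_one,
        hki, ← hc]
      have hcc : (starRingEnd ℂ) c * c = (‖c‖ ^ 2 : ℝ) := by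
        rw [mul_comm, Complex.mul_conj, Complex.normSq_eq_norm_sq]
      have e1 : (starRingEnd ℂ) c * (r:ℂ) * (ρ i i * (c * (r:ℂ)))
          + (starRingEnd ℂ) c * (r:ℂ) * c + ((starRingEnd ℂ) c * (c * (r:ℂ)) + ρ k k)
          = ((‖c‖ ^ 2 : ℝ):ℂ) * (r:ℂ) * (r:ℂ) * ρ i i
            + 2 * ((‖c‖ ^ 2 : ℝ):ℂ) * (r:ℂ) + ρ k k := by
        rw [show (starRingEnd ℂ) c * (r:ℂ) * (ρ i i * (c * (r:ℂ)))
          = ((starRingEnd ℂ) c * c) * (r:ℂ) * (r:ℂ) * ρ i i by ring,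
          show (starRingEnd ℂ) c * (r:ℂ) * c = ((starRingEnd ℂ) c * c) * (r:ℂ) by ring,
          show (starRingEnd ℂ) c * (c * (r:ℂ)) = ((starRingEnd ℂ) c * c) * (r:ℂ) by ring, hcc]
        ring
      rw [e1]
      simp [Complex.add_re, Complex.mul_re, ← Complex.ofReal_pow, Complex.ofReal_re,
        Complex.ofReal_im, him0]
      ring
    rw [this] at h1
    exact h1
  have hd := discrim_le_zero hq
  unfold discrim at hd
  have hii := (diag_nonneg' hρ i).1
  have hkk := (diag_nonneg' hρ k).1
  by_cases hc0 : ‖c‖ = 0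
  · rw [hc0]; simpa using mul_nonneg hii hkk
  · have hpos : 0 < ‖c‖ ^ 2 := by positivity
    nlinarith [hd, hpos]

lemma sum_ite_offdiag (f : Fin N → Fin N → ℝ) :
    (∑ i, ∑ k, if i ≠ k then f i k else 0)
      = ∑ z ∈ (Finset.univ : Finset (Fin N)).offDiag, f z.1 z.2 := by
  have hoff : (Finset.univ : Finset (Fin N)).offDiag
      = (Finset.univ ×ˢ Finset.univ).filter (fun z : Fin N × Fin N => z.1 ≠ z.2) := by
    ext z; simp [Finset.mem_offDiag]
  rw [hoff, Finset.sum_filter, Finset.sum_product]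

lemma sum_split_diag (g : Fin N → Fin N → ℝ) :
    ∑ i, ∑ j, g i j = (∑ i, ∑ j, if i ≠ j then g i j else 0) + ∑ i, g i i := by
  rw [← Finset.sum_add_distrib]
  refine Finset.sum_congr rfl fun i _ => ?_
  have : ∀ j, g i j = (if i ≠ j then g i j else 0) + (if j = i then g i j else 0) := by
    intro j
    by_cases h : i = j <;> simp [h, Ne, eq_comm]
  rw [Finset.sum_congr rfl fun j _ => this j, Finset.sum_add_distrib,
    Finset.sum_ite_eq' Finset.univ i (fun j => g i j)]
  simp

lemma key_ineq (hN : 2 ≤ N) (hρ : ρ.PosSemidef) (htr : ρ.trace = 1) :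
    0 ≤ linEnt N ρ ∧ pred N ρ ^ 2 + coh N ρ ^ 2 + linEnt N ρ ≤ 1 := by
  haveI : NeZero N := ⟨by omega⟩
  set n : ℝ := (N : ℝ) with hn
  have hn2 : (2:ℝ) ≤ n := by rw [hn]; exact_mod_cast hN
  set p : Fin N → ℝ := fun k => (ρ k k).re with hpdef
  have hp : ∀ k, 0 ≤ p k := fun k => (diag_nonneg' hρ k).1
  have hps : ∑ k, p k = 1 := by
    have := congrArg Complex.re htr
    simpa [Matrix.trace, Matrix.diag, Complex.re_sum] using this
  -- max diag attained
  obtain ⟨k0, hk0⟩ := exists_eq_ciSup_of_finite (f := p)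
  have hmd : maxDiag N ρ = p k0 := hk0.symm
  have hub : ∀ k, p k ≤ p k0 := by
    intro k
    calc p k ≤ ⨆ i, p i := le_ciSup (Set.Finite.bddAbove (Set.finite_range p)) k
      _ = p k0 := hk0.symm
  set a := p k0 with hadef
  set S2 := ∑ k, p k ^ 2 with hS2
  -- Cauchy-Schwarz on the diagonal minus k0
  have hA : (1 - a)^2 ≤ (n - 1) * (S2 - a^2) := by
    have hcard : ((Finset.univ.erase k0).card : ℝ) = n - 1 := by
      rw [Finset.card_erase_of_mem (Finset.mem_univ k0)]
      simp [hn, Nat.cast_sub (by omega : 1 ≤ N)]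
    have hsum1 : ∑ k ∈ Finset.univ.erase k0, p k = 1 - a := by
      rw [Finset.sum_erase_eq_sub (Finset.mem_univ k0), hps]
    have hsum2 : ∑ k ∈ Finset.univ.erase k0, p k ^ 2 = S2 - a^2 := by
      rw [Finset.sum_erase_eq_sub (f := fun k => p k ^ 2) (Finset.mem_univ k0), ← hS2]
    have := sq_sum_le_card_mul_sum_sq (s := Finset.univ.erase k0) (f := p)
    rw [hsum1, hsum2] at this
    calc (1-a)^2 ≤ ((Finset.univ.erase k0).card : ℝ) * (S2 - a^2) := this
      _ = (n-1) * (S2 - a^2) := by rw [hcard]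
  set O := ∑ i, ∑ k, if i ≠ k then ‖ρ i k‖ else 0 with hO
  set Q := ∑ i, ∑ k, if i ≠ k then ‖ρ i k‖ ^ 2 else 0 with hQ
  have hO0 : 0 ≤ O := by
    apply Finset.sum_nonneg; intro i _; apply Finset.sum_nonneg; intro k _
    split <;> positivity
  have hQ0 : 0 ≤ Q := by
    apply Finset.sum_nonneg; intro i _; apply Finset.sum_nonneg; intro k _
    split <;> positivity
  have hO2 : O ^ 2 ≤ (n * n - n) * Q := by
    rw [hO, hQ, sum_ite_offdiag, sum_ite_offdiag]
    have hNN : N ≤ N * N := Nat.le_mul_of_pos_left N (by omega)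
    have hcard : (((Finset.univ : Finset (Fin N)).offDiag.card : ℝ)) = n * n - n := by
      rw [Finset.offDiag_card, Finset.card_univ, Fintype.card_fin, Nat.cast_sub hNN,
        Nat.cast_mul, hn]
    calc (∑ z ∈ (Finset.univ : Finset (Fin N)).offDiag, ‖ρ z.1 z.2‖) ^ 2
        ≤ ((Finset.univ : Finset (Fin N)).offDiag.card : ℝ) *
          ∑ z ∈ (Finset.univ : Finset (Fin N)).offDiag, ‖ρ z.1 z.2‖ ^ 2 :=
          sq_sum_le_card_mul_sum_sq
      _ = (n * n - n) * ∑ z ∈ (Finset.univ : Finset (Fin N)).offDiag,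
            ‖ρ z.1 z.2‖ ^ 2 := by rw [hcard]
  have hQle : Q ≤ 1 - S2 := by
    have h1 : Q ≤ ∑ i, ∑ k, if i ≠ k then p i * p k else 0 := by
      rw [hQ]
      refine Finset.sum_le_sum fun i _ => Finset.sum_le_sum fun k _ => ?_
      by_cases h : i ≠ k
      · simpa [h] using offdiag_sq_le hρ i k
      · simp [h]
    have h2 : (∑ i, ∑ k, if i ≠ k then p i * p k else 0) = 1 - S2 := by
      have h3 := sum_split_diag (fun i j => p i * p j)
      have h4 : ∑ i, ∑ j, p i * p j = 1 := by
        rw [← Finset.sum_mul_sum Finset.univ Finset.univ p p, hps, mul_one]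
      have h5 : ∑ i, p i * p i = S2 := by
        rw [hS2]; exact Finset.sum_congr rfl fun i _ => by ring
      rw [h4, h5] at h3; linarith
    linarith
  have htr2 : ((ρ * ρ).trace).re = S2 + Q := by
    have hterm : ∀ i k : Fin N, ((ρ i k) * (ρ k i)).re = ‖ρ i k‖ ^ 2 := by
      intro i k
      have h5 : ρ k i = star (ρ i k) := (hρ.1.apply k i).symm
      rw [h5, Complex.star_def, Complex.mul_conj, Complex.normSq_eq_norm_sq]
      simp [← Complex.ofReal_pow]
    have h1 : ((ρ * ρ).trace).re = ∑ i, ∑ k, ‖ρ i k‖ ^ 2 := by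
      simp only [Matrix.trace, Matrix.diag, Matrix.mul_apply, Complex.re_sum]
      exact Finset.sum_congr rfl fun i _ => Finset.sum_congr rfl fun k _ => hterm i k
    have h2 := sum_split_diag (fun i k => ‖ρ i k‖ ^ 2)
    have h3 : ∑ i, ‖ρ i i‖ ^ 2 = S2 := by
      refine Finset.sum_congr rfl fun i _ => ?_
      rw [Complex.sq_norm, Complex.normSq_apply, (diag_nonneg' hρ i).2]
      simp [hpdef]; ring
    rw [h1, h2, h3, ← hQ]; ring
  have hd : (0:ℝ) < n - 1 := by linarith
  have hSL : linEnt N ρ = n * (1 - (S2 + Q)) / (n - 1) := by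
    rw [linEnt, htr2, ← hn]
  constructor
  · rw [hSL]
    apply div_nonneg (mul_nonneg (by linarith) (by linarith)) (by linarith)
  · have key : ((n * a - 1)^2 + O^2) + n*(n-1)*(1 - (S2 + Q)) ≤ (n-1)^2 := by
      nlinarith [hA, hO2, mul_le_mul_of_nonneg_left hA (by linarith : (0:ℝ) ≤ n)]
    have heq : pred N ρ ^ 2 + coh N ρ ^ 2 + linEnt N ρ
        = (((n * a - 1)^2 + O^2) + n*(n-1)*(1 - (S2 + Q))) / (n-1)^2 := by
      rw [pred, coh, hSL, hmd, ← hn, ← hO]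
      field_simp
    rw [heq]
    rw [div_le_one (by positivity)]
    exact key
lemma cs_step {M : ℕ} (w f : Fin M → ℝ) (hw : ∀ i, 0 ≤ w i) (hsum : ∑ i, w i = 1) :
    (∑ i, w i * f i) ^ 2 ≤ ∑ i, w i * f i ^ 2 := by
  have h := Finset.sum_mul_sq_le_sq_mul_sq Finset.univ (fun i => Real.sqrt (w i))
    (fun i => Real.sqrt (w i) * f i)
  have e1 : ∀ i : Fin M, Real.sqrt (w i) * (Real.sqrt (w i) * f i) = w i * f i := by
    intro i; rw [← mul_assoc, Real.mul_self_sqrt (hw i)]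
  have e2 : ∀ i : Fin M, Real.sqrt (w i) ^ 2 = w i := fun i => Real.sq_sqrt (hw i)
  have e3 : ∀ i : Fin M, (Real.sqrt (w i) * f i) ^ 2 = w i * f i ^ 2 := by
    intro i; rw [mul_pow, e2]
  calc (∑ i, w i * f i) ^ 2
      = (∑ i, Real.sqrt (w i) * (Real.sqrt (w i) * f i)) ^ 2 := by
        rw [Finset.sum_congr rfl fun i _ => (e1 i).symm]
    _ ≤ (∑ i, Real.sqrt (w i) ^ 2) * ∑ i, (Real.sqrt (w i) * f i) ^ 2 := h
    _ = ∑ i, w i * f i ^ 2 := by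
        rw [Finset.sum_congr rfl fun i _ => e2 i, Finset.sum_congr rfl fun i _ => e3 i,
          hsum, one_mul]


/-- The averaged TCR with the alternative averaging of the linear entropy:
P̄² + C̄² + Ē² ≤ 1 with Ē = ∑ w_i √(S_L(ρ_i)). -/
theorem stmt13 {N M : ℕ} (hN : 2 ≤ N) (hM : 1 ≤ M)
    (ρ : Fin M → Matrix (Fin N) (Fin N) ℂ)
    (hρ : ∀ i, (ρ i).PosSemidef) (htr : ∀ i, (ρ i).trace = 1)
    (w : Fin M → ℝ) (hw : ∀ i, 0 ≤ w i) (hsum : ∑ i, w i = 1) :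
    (∑ i, w i * pred N (ρ i)) ^ 2 + (∑ i, w i * coh N (ρ i)) ^ 2 +
      (∑ i, w i * Real.sqrt (linEnt N (ρ i))) ^ 2 ≤ 1 := by
  have keyi : ∀ i, pred N (ρ i) ^ 2 + coh N (ρ i) ^ 2 + Real.sqrt (linEnt N (ρ i)) ^ 2 ≤ 1 := by
    intro i
    obtain ⟨h0, h1⟩ := key_ineq hN (hρ i) (htr i)
    rwa [Real.sq_sqrt h0]
  calc (∑ i, w i * pred N (ρ i)) ^ 2 + (∑ i, w i * coh N (ρ i)) ^ 2 +
      (∑ i, w i * Real.sqrt (linEnt N (ρ i))) ^ 2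
      ≤ (∑ i, w i * pred N (ρ i) ^ 2) + (∑ i, w i * coh N (ρ i) ^ 2) +
        (∑ i, w i * Real.sqrt (linEnt N (ρ i)) ^ 2) :=
        add_le_add (add_le_add (cs_step w _ hw hsum) (cs_step w _ hw hsum))
          (cs_step w _ hw hsum)
    _ = ∑ i, w i * (pred N (ρ i) ^ 2 + coh N (ρ i) ^ 2 + Real.sqrt (linEnt N (ρ i)) ^ 2) := by
        rw [← Finset.sum_add_distrib, ← Finset.sum_add_distrib]
        exact Finset.sum_congr rfl fun i _ => by ring
    _ ≤ ∑ i, w i * 1 := Finset.sum_le_sum fun i _ =>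
        mul_le_mul_of_nonneg_left (keyi i) (hw i)
    _ = 1 := by rw [Finset.sum_congr rfl fun i _ => mul_one (w i), hsum]
end

section
/- Let N ≥ 2, let M ≥ 1, let ρ_1, …, ρ_M be N×N density matrices, and let w_1, …, w_M be nonnegative reals with ∑_i w_i = 1. Let ρ̄ = ∑_i w_i · ρ_i. Then (∑_i w_i · P(ρ_i))² + C(ρ̄)² ≤ 1, i.e. the average which-path predictability of the subensembles and the coherence of the averaged state satisfy the generalized wave-particle duality relation. -/
open Matrix BigOperators ComplexOrder

-- off-diagonal bound
lemma abs_le_sqrt_diag {N : ℕ} {ρ : Matrix (Fin N) (Fin N) ℂ} (h : ρ.PosSemidef)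
    (i j : Fin N) :
    ‖ρ i j‖ ≤ Real.sqrt ((ρ i i).re) * Real.sqrt ((ρ j j).re) := by
  obtain ⟨B, rfl⟩ : ∃ B : Matrix (Fin N) (Fin N) ℂ, ρ = Bᴴ * B := by
    open scoped MatrixOrder in
    obtain ⟨B, rfl⟩ := CStarAlgebra.nonneg_iff_eq_star_mul_self.mp h.nonneg
    exact ⟨B, rfl⟩
  set col : Fin N → EuclideanSpace ℂ (Fin N) := fun a => WithLp.toLp 2 (fun k => B k a) with hcol
  have hent : ∀ a b : Fin N, (Bᴴ * B) a b = inner ℂ (col a) (col b) := by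
    intro a b
    rw [Matrix.mul_apply, PiLp.inner_apply]
    simp [Matrix.conjTranspose_apply, RCLike.inner_apply, hcol, mul_comm]
  have hdiag : ∀ a : Fin N, ((Bᴴ * B) a a).re = ‖col a‖ ^ 2 := by
    intro a
    rw [hent a a]
    exact_mod_cast @inner_self_eq_norm_sq ℂ _ _ _ _ (col a)
  rw [hdiag i, hdiag j, Real.sqrt_sq (norm_nonneg _), Real.sqrt_sq (norm_nonneg _), hent i j]
  calc ‖inner (𝕜 := ℂ) (col i) (col j)‖ = ‖inner (𝕜 := ℂ) (col i) (col j)‖ := rfl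
    _ ≤ ‖col i‖ * ‖col j‖ := norm_inner_le_norm (col i) (col j)

lemma diag_re_nonneg {N : ℕ} {ρ : Matrix (Fin N) (Fin N) ℂ} (h : ρ.PosSemidef)
    (i : Fin N) : 0 ≤ (ρ i i).re := by
  obtain ⟨B, rfl⟩ : ∃ B : Matrix (Fin N) (Fin N) ℂ, ρ = Bᴴ * B := by
    open scoped MatrixOrder in
    obtain ⟨B, rfl⟩ := CStarAlgebra.nonneg_iff_eq_star_mul_self.mp h.nonneg
    exact ⟨B, rfl⟩
  rw [Matrix.mul_apply]
  simp only [Matrix.conjTranspose_apply, Complex.re_sum]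
  apply Finset.sum_nonneg
  intro k _
  simp [Complex.mul_re, Complex.conj_re, Complex.conj_im]
  nlinarith [sq_nonneg (B k i).re, sq_nonneg (B k i).im]

example : True := trivial

lemma scalar_key (n q t D : ℝ) (hn2 : 2 ≤ n) (hq0 : 0 ≤ q) (hq1 : q ≤ 1)
    (ht0 : 0 ≤ t) (ht2 : t ^ 2 = (n - 1) * q * (1 - q)) (hD0 : 0 ≤ D)
    (hDle2 : D ≤ (n - 2) * q + 2 * t) :
    (n * (1 - q) - 1) ^ 2 + D ^ 2 ≤ (n - 1) ^ 2 := by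
  have hA0 : 0 ≤ (n - 1) - (n - 2) * q := by nlinarith
  have h2t : 2 * t ≤ (n - 1) - (n - 2) * q := by
    have hsq : (2 * t) ^ 2 ≤ ((n - 1) - (n - 2) * q) ^ 2 := by
      nlinarith [sq_nonneg ((n - 1) - n * q)]
    calc 2 * t = Real.sqrt ((2 * t) ^ 2) := (Real.sqrt_sq (by positivity)).symm
      _ ≤ Real.sqrt (((n - 1) - (n - 2) * q) ^ 2) := Real.sqrt_le_sqrt hsq
      _ = (n - 1) - (n - 2) * q := Real.sqrt_sq hA0
  have hB0 : 0 ≤ (n - 2) * q + 2 * t := by nlinarith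
  have hD2 : D ^ 2 ≤ ((n - 2) * q + 2 * t) ^ 2 := pow_le_pow_left₀ hD0 hDle2 2
  nlinarith [hD2, ht2, mul_nonneg (mul_nonneg hq0 (by linarith : (0:ℝ) ≤ n - 2))
    (by linarith : (0:ℝ) ≤ (n - 1) - (n - 2) * q - 2 * t)]

lemma key_single {N : ℕ} (hN : 2 ≤ N) {ρ : Matrix (Fin N) (Fin N) ℂ}
    (h : ρ.PosSemidef) (ht : ρ.trace = 1) :
    pred N ρ ^ 2 + coh N ρ ^ 2 ≤ 1 := by
  have hNpos : 0 < N := by omega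
  haveI : Nonempty (Fin N) := ⟨⟨0, hNpos⟩⟩
  set n : ℝ := (N : ℝ) with hn
  have hn2 : (2 : ℝ) ≤ n := by rw [hn]; exact_mod_cast hN
  have hn1 : (0 : ℝ) < n - 1 := by linarith
  set p : Fin N → ℝ := fun i => (ρ i i).re with hp
  have hp0 : ∀ i, 0 ≤ p i := fun i => diag_re_nonneg h i
  have hps : ∑ i, p i = 1 := by
    have := congrArg Complex.re ht
    simpa [Matrix.trace, Matrix.diag, Complex.re_sum] using this
  obtain ⟨k, hk⟩ := exists_eq_ciSup_of_finite (f := fun i => (ρ i i).re)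
  have hmax : maxDiag N ρ = p k := hk.symm
  set q : ℝ := 1 - p k with hq
  have hq0 : 0 ≤ q := by
    have : p k + ∑ i ∈ Finset.univ.erase k, p i = ∑ i, p i :=
      Finset.add_sum_erase _ _ (Finset.mem_univ k)
    have h2 : 0 ≤ ∑ i ∈ Finset.univ.erase k, p i :=
      Finset.sum_nonneg fun i _ => hp0 i
    rw [hps] at this
    simp only [hq]; linarith
  have hq1 : q ≤ 1 := by have := hp0 k; simp only [hq]; linarith
  set r : Fin N → ℝ := fun i => Real.sqrt (p i) with hr
  have hr0 : ∀ i, 0 ≤ r i := fun i => Real.sqrt_nonneg _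
  have hr2 : ∀ i, r i ^ 2 = p i := fun i => Real.sq_sqrt (hp0 i)
  set D : ℝ := ∑ i, ∑ j, if i ≠ j then ‖ρ i j‖ else 0 with hD
  have hD0 : 0 ≤ D := Finset.sum_nonneg fun i _ => Finset.sum_nonneg fun j _ => by
    split
    · exact norm_nonneg _
    · exact le_rfl
  -- D ≤ s² - 1
  set s : ℝ := ∑ i, r i with hs
  have hDle : D ≤ s ^ 2 - 1 := by
    have step1 : D ≤ ∑ i, ∑ j, (if i ≠ j then r i * r j else 0) := by
      apply Finset.sum_le_sum; intro i _
      apply Finset.sum_le_sum; intro j _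
      split
      · calc ‖ρ i j‖ ≤ Real.sqrt (p i) * Real.sqrt (p j) :=
              abs_le_sqrt_diag h i j
          _ = r i * r j := rfl
      · exact le_rfl
    have step2 : ∑ i, ∑ j, (if i ≠ j then r i * r j else 0) = s ^ 2 - 1 := by
      have inner_eq : ∀ i : Fin N, ∑ j, (if i ≠ j then r i * r j else 0)
          = r i * s - p i := by
        intro i
        have : ∀ j, (if i ≠ j then r i * r j else 0)
            = r i * r j - (if i = j then r i * r j else 0) := by
          intro j; by_cases hij : i = j <;> simp [hij]
        rw [Finset.sum_congr rfl fun j _ => this j, Finset.sum_sub_distrib,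
          Finset.sum_ite_eq Finset.univ i fun j => r i * r j]
        simp [← Finset.mul_sum, ← hs, sq, ← hr2 i]
      rw [Finset.sum_congr rfl fun i _ => inner_eq i, Finset.sum_sub_distrib,
        ← Finset.sum_mul, ← hs, hps, sq]
    linarith [step2 ▸ step1]
  -- bound on s
  set S : ℝ := Real.sqrt ((n - 1) * q) with hS
  have hS0 : 0 ≤ S := Real.sqrt_nonneg _
  have hS2 : S ^ 2 = (n - 1) * q := Real.sq_sqrt (by positivity)
  have hsle : s ≤ r k + S := by
    have h1 : s = r k + ∑ i ∈ Finset.univ.erase k, r i :=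
      (Finset.add_sum_erase _ _ (Finset.mem_univ k)).symm
    have h2 : (∑ i ∈ Finset.univ.erase k, r i) ^ 2 ≤ (n - 1) * q := by
      have hcs := sq_sum_le_card_mul_sum_sq (s := Finset.univ.erase k) (f := r)
      have hcard : ((Finset.univ.erase k).card : ℝ) = n - 1 := by
        rw [Finset.card_erase_of_mem (Finset.mem_univ k)]
        simp [hn, Nat.cast_sub (by omega : 1 ≤ N)]
      have hsum2 : ∑ i ∈ Finset.univ.erase k, r i ^ 2 = q := by
        have : p k + ∑ i ∈ Finset.univ.erase k, p i = ∑ i, p i :=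
          Finset.add_sum_erase _ _ (Finset.mem_univ k)
        rw [hps] at this
        rw [Finset.sum_congr rfl fun i _ => hr2 i]
        simp only [hq]; linarith
      calc (∑ i ∈ Finset.univ.erase k, r i) ^ 2
          ≤ ((Finset.univ.erase k).card : ℝ) * ∑ i ∈ Finset.univ.erase k, r i ^ 2 := hcs
        _ = (n - 1) * q := by rw [hcard, hsum2]
    have h3 : ∑ i ∈ Finset.univ.erase k, r i ≤ S := by
      have hnn : 0 ≤ ∑ i ∈ Finset.univ.erase k, r i :=
        Finset.sum_nonneg fun i _ => hr0 i
      calc ∑ i ∈ Finset.univ.erase k, r i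
          = Real.sqrt ((∑ i ∈ Finset.univ.erase k, r i) ^ 2) := (Real.sqrt_sq hnn).symm
        _ ≤ S := Real.sqrt_le_sqrt h2
    linarith [h1]
  set t : ℝ := r k * S with htdef
  have ht0 : 0 ≤ t := mul_nonneg (hr0 k) hS0
  have ht2 : t ^ 2 = (n - 1) * q * p k := by
    rw [htdef, mul_pow, hr2, hS2]; ring
  have hDle2 : D ≤ (n - 2) * q + 2 * t := by
    have hs0 : 0 ≤ s := Finset.sum_nonneg fun i _ => hr0 i
    have : s ^ 2 ≤ (r k + S) ^ 2 := pow_le_pow_left₀ hs0 hsle 2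
    have hexp : (r k + S) ^ 2 = p k + (n - 1) * q + 2 * t := by
      rw [add_sq, hr2, hS2, htdef]; ring
    have hpk : p k = 1 - q := by simp only [hq]; ring
    nlinarith [hDle]
  -- key scalar inequality
  have hpk : p k = 1 - q := by simp only [hq]; ring
  have ht2' : t ^ 2 = (n - 1) * q * (1 - q) := by rw [ht2, hpk]
  have key2 : (n * p k - 1) ^ 2 + D ^ 2 ≤ (n - 1) ^ 2 := by
    rw [hpk]
    exact scalar_key n q t D hn2 hq0 hq1 ht0 ht2' hD0 hDle2
  -- conclude
  have hpred : pred N ρ = (n * p k - 1) / (n - 1) := by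
    rw [pred, hmax]
  have hcoh : coh N ρ = (1 / (n - 1)) * D := rfl
  rw [hpred, hcoh]
  have heq : ((n * p k - 1) / (n - 1)) ^ 2 + (1 / (n - 1) * D) ^ 2
      = ((n * p k - 1) ^ 2 + D ^ 2) / (n - 1) ^ 2 := by
    field_simp
  rw [heq, div_le_one (by positivity)]
  exact key2

lemma coh_nonneg {N : ℕ} (hN : 2 ≤ N) (ρ : Matrix (Fin N) (Fin N) ℂ) :
    0 ≤ coh N ρ := by
  have hn1 : (0:ℝ) < (N:ℝ) - 1 := by
    have : (2:ℝ) ≤ (N:ℝ) := by exact_mod_cast hN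
    linarith
  apply mul_nonneg (by positivity)
  refine Finset.sum_nonneg fun i _ => Finset.sum_nonneg fun j _ => ?_
  split
  · exact norm_nonneg _
  · exact le_rfl

lemma jensen_sq {M : ℕ} (w x : Fin M → ℝ) (hw : ∀ i, 0 ≤ w i)
    (hsum : ∑ i, w i = 1) :
    (∑ i, w i * x i) ^ 2 ≤ ∑ i, w i * x i ^ 2 := by
  have hcs := Finset.sum_mul_sq_le_sq_mul_sq Finset.univ
    (fun i => Real.sqrt (w i)) (fun i => Real.sqrt (w i) * x i)
  have e1 : ∀ i : Fin M, Real.sqrt (w i) * (Real.sqrt (w i) * x i) = w i * x i := by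
    intro i; rw [← mul_assoc, Real.mul_self_sqrt (hw i)]
  have e2 : ∀ i : Fin M, Real.sqrt (w i) ^ 2 = w i := fun i => Real.sq_sqrt (hw i)
  have e3 : ∀ i : Fin M, (Real.sqrt (w i) * x i) ^ 2 = w i * x i ^ 2 := by
    intro i; rw [mul_pow, e2 i]
  rw [Finset.sum_congr rfl fun i _ => e1 i, Finset.sum_congr rfl fun i _ => e2 i,
    Finset.sum_congr rfl fun i _ => e3 i, hsum, one_mul] at hcs
  exact hcs

lemma coh_convex {N M : ℕ} (hN : 2 ≤ N) (ρ : Fin M → Matrix (Fin N) (Fin N) ℂ)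
    (w : Fin M → ℝ) (hw : ∀ i, 0 ≤ w i) :
    coh N (∑ i, ((w i : ℂ) • ρ i)) ≤ ∑ i, w i * coh N (ρ i) := by
  have hn1 : (0:ℝ) < (N:ℝ) - 1 := by
    have : (2:ℝ) ≤ (N:ℝ) := by exact_mod_cast hN
    linarith
  unfold coh
  have hrhs : ∑ i, w i * ((1 / ((N:ℝ) - 1)) *
      ∑ j, ∑ k, if j ≠ k then ‖ρ i j k‖ else 0)
      = (1 / ((N:ℝ) - 1)) * ∑ i, w i *
        ∑ j, ∑ k, if j ≠ k then ‖ρ i j k‖ else 0 := by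
    rw [Finset.mul_sum]; apply Finset.sum_congr rfl; intro i _; ring
  rw [hrhs]
  apply mul_le_mul_of_nonneg_left _ (by positivity)
  have hentry : ∀ j k : Fin N, ‖(∑ i, ((w i : ℂ) • ρ i)) j k‖
      ≤ ∑ i, w i * ‖ρ i j k‖ := by
    intro j k
    have happ : (∑ i, ((w i : ℂ) • ρ i)) j k = ∑ i, (w i : ℂ) * ρ i j k := by
      simp [Matrix.sum_apply]
    rw [happ]
    calc ‖∑ i, (w i : ℂ) * ρ i j k‖
        ≤ ∑ i, ‖(w i : ℂ) * ρ i j k‖ :=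
          norm_sum_le _ _
      _ = ∑ i, w i * ‖ρ i j k‖ := by
          apply Finset.sum_congr rfl; intro i _
          rw [norm_mul, Complex.norm_real, Real.norm_eq_abs, abs_of_nonneg (hw i)]
  calc ∑ j, ∑ k, (if j ≠ k then ‖(∑ i, ((w i : ℂ) • ρ i)) j k‖ else 0)
      ≤ ∑ j, ∑ k, (if j ≠ k then ∑ i, w i * ‖ρ i j k‖ else 0) := by
        apply Finset.sum_le_sum; intro j _
        apply Finset.sum_le_sum; intro k _
        split
        · exact hentry j k
        · exact le_rfl
    _ = ∑ j, ∑ k, ∑ i, (if j ≠ k then w i * ‖ρ i j k‖ else 0) := by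
        apply Finset.sum_congr rfl; intro j _
        apply Finset.sum_congr rfl; intro k _
        split
        · rfl
        · simp
    _ = ∑ i, ∑ j, ∑ k, (if j ≠ k then w i * ‖ρ i j k‖ else 0) := by
        rw [Finset.sum_congr rfl fun j (_ : j ∈ Finset.univ) => Finset.sum_comm,
          Finset.sum_comm]
    _ = ∑ i, w i * ∑ j, ∑ k, (if j ≠ k then ‖ρ i j k‖ else 0) := by
        apply Finset.sum_congr rfl; intro i _
        simp_rw [Finset.mul_sum, mul_ite, mul_zero]

/-- The generalized wave-particle duality: the average predictability of the
subensembles and the coherence of the averaged state satisfy P̄² + C(ρ̄)² ≤ 1. -/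
theorem stmt16 {N M : ℕ} (hN : 2 ≤ N) (hM : 1 ≤ M)
    (ρ : Fin M → Matrix (Fin N) (Fin N) ℂ)
    (hρ : ∀ i, (ρ i).PosSemidef) (htr : ∀ i, (ρ i).trace = 1)
    (w : Fin M → ℝ) (hw : ∀ i, 0 ≤ w i) (hsum : ∑ i, w i = 1) :
    (∑ i, w i * pred N (ρ i)) ^ 2 +
      (coh N (∑ i, ((w i : ℂ) • ρ i))) ^ 2 ≤ 1 := by
  have hkey : ∀ i, pred N (ρ i) ^ 2 + coh N (ρ i) ^ 2 ≤ 1 :=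
    fun i => key_single hN (hρ i) (htr i)
  have hC0 : ∀ i, 0 ≤ coh N (ρ i) := fun i => coh_nonneg hN (ρ i)
  have hCσ0 : 0 ≤ coh N (∑ i, ((w i : ℂ) • ρ i)) := coh_nonneg hN _
  have hconv := coh_convex hN ρ w hw
  have hC0' : 0 ≤ ∑ i, w i * coh N (ρ i) :=
    Finset.sum_nonneg fun i _ => mul_nonneg (hw i) (hC0 i)
  have h3 : coh N (∑ i, ((w i : ℂ) • ρ i)) ^ 2 ≤ (∑ i, w i * coh N (ρ i)) ^ 2 :=
    pow_le_pow_left₀ hCσ0 hconv 2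
  have h1 := jensen_sq w (fun i => pred N (ρ i)) hw hsum
  have h2 := jensen_sq w (fun i => coh N (ρ i)) hw hsum
  have h4 : ∑ i, w i * pred N (ρ i) ^ 2 + ∑ i, w i * coh N (ρ i) ^ 2 ≤ 1 := by
    rw [← Finset.sum_add_distrib]
    calc ∑ i, (w i * pred N (ρ i) ^ 2 + w i * coh N (ρ i) ^ 2)
        = ∑ i, w i * (pred N (ρ i) ^ 2 + coh N (ρ i) ^ 2) := by
          apply Finset.sum_congr rfl; intro i _; ring
      _ ≤ ∑ i, w i * 1 := by
          apply Finset.sum_le_sum; intro i _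
          exact mul_le_mul_of_nonneg_left (hkey i) (hw i)
      _ = 1 := by simp [hsum]
  linarith
end
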